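/- For α ∈ (0,1) and λ > 0, the function l(t) = L^{−1}(1/(s^α + λ))(t), given explicitly for t > 0 by l(t) = (1/π) ∫_0^∞ e^{−st} (λ s^α sin(απ))/(s^{2α} + 2λ s^α cos(απ) + λ²) ds, is nonnegative, continuous on (0,∞), and locally integrable on [0,∞). -/

import Mathlib

open MeasureTheory

private lemma denom_key (α lam : ℝ) (hα0 : 0 < α) (hα1 : α < 1) (hlam : 0 < lam)
    {s : ℝ} (hs : 0 < s) :
    0 < s ^ (2 * α) + 2 * lam * s ^ α * Real.cos (α * Real.pi) + lam ^ 2 ∧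
    lam * s ^ α * Real.sin (α * Real.pi) ^ 2 ≤
      s ^ (2 * α) + 2 * lam * s ^ α * Real.cos (α * Real.pi) + lam ^ 2 ∧
    (s ^ α) ^ 2 * Real.sin (α * Real.pi) ^ 2 ≤
      s ^ (2 * α) + 2 * lam * s ^ α * Real.cos (α * Real.pi) + lam ^ 2 := by
  have hsin : 0 < Real.sin (α * Real.pi) := by
    apply Real.sin_pos_of_pos_of_lt_pi
    · positivity
    · nlinarith [Real.pi_pos]
  have hx : 0 < s ^ α := Real.rpow_pos_of_pos hs α
  have h2 : s ^ (2 * α) = (s ^ α) ^ 2 := by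
    rw [mul_comm, Real.rpow_mul hs.le, Real.rpow_two]
  set x := s ^ α
  set c := Real.cos (α * Real.pi)
  set sn := Real.sin (α * Real.pi)
  have hpyth : sn ^ 2 + c ^ 2 = 1 := Real.sin_sq_add_cos_sq _
  rw [h2]
  have h1 : (lam * sn) ^ 2 ≤ x ^ 2 + 2 * lam * x * c + lam ^ 2 := by
    nlinarith [sq_nonneg (x + lam * c)]
  have h2' : (x * sn) ^ 2 ≤ x ^ 2 + 2 * lam * x * c + lam ^ 2 := by
    nlinarith [sq_nonneg (x * c + lam)]
  have hpos : 0 < x ^ 2 + 2 * lam * x * c + lam ^ 2 := by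
    nlinarith [pow_pos (mul_pos hlam hsin) 2]
  refine ⟨hpos, by nlinarith [sq_nonneg (x * sn - lam * sn)], by nlinarith [h2']⟩

theorem inverse_laplace_salpha_lambda (α lam : ℝ) (hα0 : 0 < α) (hα1 : α < 1)
    (hlam : 0 < lam) :
    (∀ t > (0:ℝ), 0 ≤ (1 / Real.pi) * ∫ s in Set.Ioi (0:ℝ),
        Real.exp (-s * t) * (lam * s ^ α * Real.sin (α * Real.pi)) /
          (s ^ (2 * α) + 2 * lam * s ^ α * Real.cos (α * Real.pi) + lam ^ 2)) ∧
    ContinuousOn (fun t : ℝ => (1 / Real.pi) * ∫ s in Set.Ioi (0:ℝ),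
        Real.exp (-s * t) * (lam * s ^ α * Real.sin (α * Real.pi)) /
          (s ^ (2 * α) + 2 * lam * s ^ α * Real.cos (α * Real.pi) + lam ^ 2))
      (Set.Ioi 0) ∧
    ∀ T > (0:ℝ), IntegrableOn (fun t : ℝ => (1 / Real.pi) * ∫ s in Set.Ioi (0:ℝ),
        Real.exp (-s * t) * (lam * s ^ α * Real.sin (α * Real.pi)) /
          (s ^ (2 * α) + 2 * lam * s ^ α * Real.cos (α * Real.pi) + lam ^ 2))
      (Set.Ioc 0 T) volume := by
  have hπ : 0 < Real.pi := Real.pi_pos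
  have hsin : 0 < Real.sin (α * Real.pi) := by
    apply Real.sin_pos_of_pos_of_lt_pi
    · positivity
    · nlinarith
  set sn := Real.sin (α * Real.pi) with hsn_def
  set F : ℝ → ℝ → ℝ := fun t s =>
    Real.exp (-s * t) * (lam * s ^ α * sn) /
      (s ^ (2 * α) + 2 * lam * s ^ α * Real.cos (α * Real.pi) + lam ^ 2) with hF_def
  -- pointwise facts
  have hF_nonneg : ∀ t : ℝ, ∀ s ∈ Set.Ioi (0:ℝ), 0 ≤ F t s := by
    intro t s hs
    obtain ⟨hden, _, _⟩ := denom_key α lam hα0 hα1 hlam hs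
    have hx : 0 < s ^ α := Real.rpow_pos_of_pos hs α
    exact div_nonneg (by positivity) hden.le
  have hF_bound1 : ∀ t : ℝ, ∀ s ∈ Set.Ioi (0:ℝ), F t s ≤ Real.exp (-s * t) * sn⁻¹ := by
    intro t s hs
    obtain ⟨hden, hb, _⟩ := denom_key α lam hα0 hα1 hlam hs
    rw [hF_def, div_le_iff₀ hden]
    have he : 0 < Real.exp (-s * t) := Real.exp_pos _
    calc Real.exp (-s * t) * (lam * s ^ α * sn)
        = Real.exp (-s * t) * sn⁻¹ * (lam * s ^ α * sn ^ 2) := by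
          field_simp
      _ ≤ Real.exp (-s * t) * sn⁻¹ *
          (s ^ (2 * α) + 2 * lam * s ^ α * Real.cos (α * Real.pi) + lam ^ 2) := by
          apply mul_le_mul_of_nonneg_left hb (by positivity)
  have hF_bound2 : ∀ t : ℝ, ∀ s ∈ Set.Ioi (0:ℝ),
      F t s ≤ (lam / sn) * (s ^ ((1 - α) - 1) * Real.exp (-(t * s))) := by
    intro t s hs
    obtain ⟨hden, _, hb⟩ := denom_key α lam hα0 hα1 hlam hs
    have hx : 0 < s ^ α := Real.rpow_pos_of_pos hs α
    have hxe : s ^ ((1 - α) - 1) = (s ^ α)⁻¹ := by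
      rw [show (1 - α) - 1 = -α by ring, Real.rpow_neg hs.le]
    rw [hF_def, div_le_iff₀ hden, hxe, neg_mul, mul_comm t s, ← neg_mul]
    have he : 0 < Real.exp (-(s * t)) := Real.exp_pos _
    rw [show -s * t = -(s*t) by ring]
    calc Real.exp (-(s * t)) * (lam * s ^ α * sn)
        = (lam / sn) * ((s ^ α)⁻¹ * Real.exp (-(s * t))) * ((s ^ α) ^ 2 * sn ^ 2) := by
          field_simp
      _ ≤ (lam / sn) * ((s ^ α)⁻¹ * Real.exp (-(s * t))) *
          (s ^ (2 * α) + 2 * lam * s ^ α * Real.cos (α * Real.pi) + lam ^ 2) := by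
          apply mul_le_mul_of_nonneg_left hb (by positivity)
  -- measurability in s
  have hF_cont : ∀ t : ℝ, ContinuousOn (F t) (Set.Ioi 0) := by
    intro t
    apply ContinuousOn.div
    · apply ContinuousOn.mul
      · exact (Real.continuous_exp.comp (by continuity)).continuousOn
      · intro s hs
        have h1 : ContinuousAt (fun u : ℝ => u ^ α) s :=
          Real.continuousAt_rpow_const s α (Or.inl (ne_of_gt hs))
        have : ContinuousAt (fun u : ℝ => lam * u ^ α * sn) s :=
          (h1.const_mul lam).mul continuousAt_const
        exact this.continuousWithinAt
    · intro s hs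
      have h1 : ContinuousAt (fun u : ℝ => u ^ α) s :=
        Real.continuousAt_rpow_const s α (Or.inl (ne_of_gt hs))
      have h2 : ContinuousAt (fun u : ℝ => u ^ (2*α)) s :=
        Real.continuousAt_rpow_const s (2*α) (Or.inl (ne_of_gt hs))
      have : ContinuousAt (fun u : ℝ =>
          u ^ (2*α) + 2 * lam * u ^ α * Real.cos (α * Real.pi) + lam ^ 2) s := by
        exact ((h2.add ((h1.const_mul (2*lam)).mul continuousAt_const)).add continuousAt_const)
      exact this.continuousWithinAt
    · intro s hs
      exact (denom_key α lam hα0 hα1 hlam hs).1.ne'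
  have hF_meas : ∀ t : ℝ, AEStronglyMeasurable (F t) (volume.restrict (Set.Ioi 0)) :=
    fun t => (hF_cont t).aestronglyMeasurable measurableSet_Ioi
  -- integrability of the bound functions
  have hbound2_int : ∀ t : ℝ, 0 < t →
      IntegrableOn (fun s => s ^ ((1 - α) - 1) * Real.exp (-(t * s))) (Set.Ioi 0) := by
    intro t ht
    have h1α : (0:ℝ) < 1 - α := by linarith
    have hG := Real.GammaIntegral_convergent h1α
    have := (integrableOn_Ioi_comp_mul_left_iff
      (fun x => Real.exp (-x) * x ^ ((1 - α) - 1)) 0 ht).mpr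
      (by rw [mul_zero]; simpa using hG)
    have h2 := this.const_mul (t ^ α)
    apply IntegrableOn.congr_fun h2 _ measurableSet_Ioi
    intro s hs
    have hs' : (0:ℝ) < s := hs
    have htα : (0:ℝ) < t ^ α := Real.rpow_pos_of_pos ht α
    simp only
    rw [Real.mul_rpow ht.le hs'.le, show (1:ℝ) - α - 1 = -α by ring,
      Real.rpow_neg ht.le]
    field_simp
  have hF_int : ∀ t : ℝ, 0 < t → IntegrableOn (F t) (Set.Ioi 0) := by
    intro t ht
    apply Integrable.mono' (g := fun s => Real.exp (-t * s) * sn⁻¹)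
      (((exp_neg_integrableOn_Ioi 0 ht)).mul_const sn⁻¹) (hF_meas t)
    filter_upwards [ae_restrict_mem measurableSet_Ioi] with s hs
    rw [Real.norm_of_nonneg (hF_nonneg t s hs)]
    rw [show -t * s = -s * t by ring]
    exact hF_bound1 t s hs
  -- part 1: nonneg
  have part1 : ∀ t > (0:ℝ), 0 ≤ (1 / Real.pi) * ∫ s in Set.Ioi (0:ℝ), F t s := by
    intro t _
    apply mul_nonneg (by positivity)
    exact setIntegral_nonneg measurableSet_Ioi (hF_nonneg t)
  -- part 2: continuity
  have part2 : ContinuousOn (fun t : ℝ => (1 / Real.pi) * ∫ s in Set.Ioi (0:ℝ), F t s)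
      (Set.Ioi 0) := by
    intro t₀ ht₀
    apply ContinuousAt.continuousWithinAt
    apply ContinuousAt.mul continuousAt_const
    apply continuousAt_of_dominated (bound := fun s => Real.exp (-(t₀/2) * s) * sn⁻¹)
    · exact Filter.Eventually.of_forall fun t => hF_meas t
    · have h2 : t₀ / 2 < t₀ := half_lt_self ht₀
      filter_upwards [lt_mem_nhds h2] with t ht
      filter_upwards [ae_restrict_mem measurableSet_Ioi] with s hs
      rw [Real.norm_of_nonneg (hF_nonneg t s hs)]
      calc F t s ≤ Real.exp (-s * t) * sn⁻¹ := hF_bound1 t s hs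
        _ ≤ Real.exp (-(t₀/2) * s) * sn⁻¹ := by
            apply mul_le_mul_of_nonneg_right _ (by positivity)
            apply Real.exp_le_exp.mpr
            have hs' : (0:ℝ) < s := hs
            nlinarith
    · exact (exp_neg_integrableOn_Ioi 0 (half_pos (Set.mem_Ioi.mp ht₀))).mul_const sn⁻¹
    · filter_upwards [ae_restrict_mem measurableSet_Ioi] with s _
      apply ContinuousAt.div_const
      apply ContinuousAt.mul _ continuousAt_const
      exact Real.continuous_exp.continuousAt.comp (by fun_prop)
  -- the pointwise bound on the integral
  have hGamma : (0:ℝ) < 1 - α := by linarith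
  have key : ∀ t : ℝ, 0 < t → (1 / Real.pi) * ∫ s in Set.Ioi (0:ℝ), F t s ≤
      (1 / Real.pi) * ((lam / sn) * ((1/t) ^ (1 - α) * Real.Gamma (1 - α))) := by
    intro t ht
    apply mul_le_mul_of_nonneg_left _ (by positivity)
    calc (∫ s in Set.Ioi (0:ℝ), F t s)
        ≤ ∫ s in Set.Ioi (0:ℝ), (lam / sn) * (s ^ ((1 - α) - 1) * Real.exp (-(t * s))) := by
          apply setIntegral_mono_on (hF_int t ht) ((hbound2_int t ht).const_mul _)
            measurableSet_Ioi (hF_bound2 t)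
      _ = (lam / sn) * ((1/t) ^ (1 - α) * Real.Gamma (1 - α)) := by
          rw [integral_const_mul, Real.integral_rpow_mul_exp_neg_mul_Ioi hGamma ht]
  refine ⟨part1, part2, ?_⟩
  -- part 3
  intro T hT
  set C : ℝ := (1 / Real.pi) * ((lam / sn) * Real.Gamma (1 - α)) with hC
  have hC0 : 0 ≤ C := by
    have := Real.Gamma_pos_of_pos hGamma
    positivity
  have hg_int : IntegrableOn (fun t : ℝ => C * t ^ (α - 1)) (Set.Ioc 0 T) := by
    apply Integrable.const_mul
    exact (intervalIntegral.intervalIntegrable_rpow' (a := 0) (b := T)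
      (r := α - 1) (by linarith)).1
  apply Integrable.mono' hg_int
  · apply ContinuousOn.aestronglyMeasurable _ measurableSet_Ioc
    exact part2.mono (fun x hx => hx.1)
  · filter_upwards [ae_restrict_mem measurableSet_Ioc] with t ht
    rw [Real.norm_of_nonneg (part1 t ht.1)]
    calc (1 / Real.pi) * ∫ s in Set.Ioi (0:ℝ), F t s
        ≤ (1 / Real.pi) * ((lam / sn) * ((1/t) ^ (1 - α) * Real.Gamma (1 - α))) :=
          key t ht.1
      _ = C * t ^ (α - 1) := by
          rw [hC]
          have : (1/t) ^ (1 - α) = t ^ (α - 1) := by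
            rw [one_div, Real.inv_rpow ht.1.le, ← Real.rpow_neg ht.1.le, show -(1-α) = α - 1 by ring]
          rw [this]; ring
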